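/- Let N ⊆ ℕ² be a finite connected skew shape admitting at least one standard Young tableau. Then there exists exactly one source tableau of shape N: exactly one standard Young tableau τ of shape N such that whenever (i,j) and (i,j+1) both lie in N, τ(i,j+1) = τ(i,j)+1. -/

import Mathlib

/-- A standard Young tableau of shape `N ⊆ ℕ²` (cells written `(row, column)`). -/
def IsSYTN (N : Finset (ℕ × ℕ)) (τ : ℕ × ℕ → ℕ) : Prop :=
  Set.BijOn τ ↑N (Set.Icc 1 N.card) ∧
  (∀ p : ℕ × ℕ, p ∈ N → (p.1, p.2 + 1) ∈ N → τ p < τ (p.1, p.2 + 1)) ∧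
  (∀ p : ℕ × ℕ, p ∈ N → (p.1 + 1, p.2) ∈ N → τ p < τ (p.1 + 1, p.2))

/-- The set of standard Young tableaux of shape `N`, normalized to vanish off `N`. -/
def sytSetN (N : Finset (ℕ × ℕ)) : Set (ℕ × ℕ → ℕ) :=
  {τ | IsSYTN N τ ∧ ∀ v, v ∉ N → τ v = 0}

/-- `N` is a skew shape `λ/μ`. -/
def IsSkewShape (N : Finset (ℕ × ℕ)) : Prop :=
  ∃ lam mu : ℕ → ℕ, Antitone lam ∧ Antitone mu ∧ (∀ i, mu i ≤ lam i) ∧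
    ∀ p : ℕ × ℕ, p ∈ N ↔ mu p.1 < p.2 ∧ p.2 ≤ lam p.1

/-- Two cells are adjacent if they share an edge. -/
def AdjCell (u v : ℕ × ℕ) : Prop :=
  (u.1 = v.1 ∧ (u.2 = v.2 + 1 ∨ v.2 = u.2 + 1)) ∨
  (u.2 = v.2 ∧ (u.1 = v.1 + 1 ∨ v.1 = u.1 + 1))

/-- `N` is connected. -/
def ConnectedShape (N : Finset (ℕ × ℕ)) : Prop :=
  ∀ u ∈ N, ∀ v ∈ N, Relation.ReflTransGen (fun a b => b ∈ N ∧ AdjCell a b) u v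

/-- A source tableau: horizontally adjacent cells carry consecutive entries. -/
def IsSource (N : Finset (ℕ × ℕ)) (τ : ℕ × ℕ → ℕ) : Prop :=
  ∀ p : ℕ × ℕ, p ∈ N → (p.1, p.2 + 1) ∈ N → τ (p.1, p.2 + 1) = τ p + 1

namespace SourceAux

/-- Row-reading (lex) weak order on cells. -/
def lexle (q p : ℕ × ℕ) : Prop := q.1 < p.1 ∨ (q.1 = p.1 ∧ q.2 ≤ p.2)

/-- Row-reading (lex) strict order on cells. -/
def lexlt (q p : ℕ × ℕ) : Prop := q.1 < p.1 ∨ (q.1 = p.1 ∧ q.2 < p.2)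

instance (q p : ℕ × ℕ) : Decidable (lexle q p) :=
  inferInstanceAs (Decidable (q.1 < p.1 ∨ (q.1 = p.1 ∧ q.2 ≤ p.2)))

lemma lexlt_total {p q : ℕ × ℕ} (h : p ≠ q) : lexlt p q ∨ lexlt q p := by
  rcases p with ⟨a, b⟩; rcases q with ⟨c, d⟩
  simp only [lexlt, ne_eq, Prod.mk.injEq] at *
  omega

lemma lexle_iff {q p : ℕ × ℕ} : lexle q p ↔ lexlt q p ∨ q = p := by
  rcases p with ⟨a, b⟩; rcases q with ⟨c, d⟩
  simp only [lexle, lexlt, Prod.mk.injEq]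
  omega

lemma lexlt_of_lexle_lexlt {r q p : ℕ × ℕ} (h1 : lexle r q) (h2 : lexlt q p) : lexlt r p := by
  rcases p with ⟨a, b⟩; rcases q with ⟨c, d⟩; rcases r with ⟨e, f⟩
  simp only [lexle, lexlt] at *
  omega

/-- The rank formula: any strictly lex-monotone bijection onto `[1, n]` is the
lex rank function. -/
lemma rank_eq {N : Finset (ℕ × ℕ)} {τ : ℕ × ℕ → ℕ}
    (hbij : Set.BijOn τ ↑N (Set.Icc 1 N.card))
    (hmono : ∀ p ∈ N, ∀ q ∈ N, lexlt q p → τ q < τ p)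
    {p : ℕ × ℕ} (hp : p ∈ N) :
    τ p = (N.filter (fun q => lexle q p)).card := by
  obtain ⟨h1, h2⟩ := hbij.mapsTo hp
  have hsum := Finset.card_filter_add_card_filter_not
    (s := N) (p := fun q => lexle q p)
  have hF : (N.filter (fun q => lexle q p)).card ≤ τ p := by
    have hcard := Finset.card_le_card_of_injOn (s := N.filter (fun q => lexle q p))
        (t := Finset.Icc 1 (τ p)) τ ?_ ?_
    · simpa using hcard
    · intro q hq
      rw [Finset.mem_coe, Finset.mem_filter] at hq
      obtain ⟨hqN, hqle⟩ := hq
      have hq1 : 1 ≤ τ q := (hbij.mapsTo hqN).1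
      rcases lexle_iff.1 hqle with h | rfl
      · exact Finset.mem_Icc.2 ⟨hq1, le_of_lt (hmono p hp q hqN h)⟩
      · exact Finset.mem_Icc.2 ⟨hq1, le_refl _⟩
    · exact hbij.injOn.mono (by exact_mod_cast Finset.filter_subset _ _)
  have hG : (N.filter (fun q => ¬ lexle q p)).card ≤ N.card - τ p := by
    have hcard := Finset.card_le_card_of_injOn (s := N.filter (fun q => ¬ lexle q p))
        (t := Finset.Icc (τ p + 1) N.card) τ ?_ ?_
    · rw [Nat.card_Icc] at hcard; omega
    · intro q hq
      rw [Finset.mem_coe, Finset.mem_filter] at hq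
      obtain ⟨hqN, hqle⟩ := hq
      have hne : p ≠ q := by rintro rfl; exact hqle (lexle_iff.2 (Or.inr rfl))
      have hlt : lexlt p q := by
        rcases lexlt_total hne with h | h
        · exact h
        · exact absurd (lexle_iff.2 (Or.inl h)) hqle
      exact Finset.mem_Icc.2 ⟨hmono q hqN p hp hlt, (hbij.mapsTo hqN).2⟩
    · exact hbij.injOn.mono (by exact_mod_cast Finset.filter_subset _ _)
  omega

/-- The row-reading tableau. -/
def tau0 (N : Finset (ℕ × ℕ)) (p : ℕ × ℕ) : ℕ :=
  if p ∈ N then (N.filter (fun q => lexle q p)).card else 0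

lemma tau0_mono {N : Finset (ℕ × ℕ)} {p q : ℕ × ℕ} (hp : p ∈ N) (hq : q ∈ N)
    (h : lexlt q p) : tau0 N q < tau0 N p := by
  rw [tau0, tau0, if_pos hp, if_pos hq]
  apply Finset.card_lt_card
  constructor
  · intro r hr
    rw [Finset.mem_filter] at *
    exact ⟨hr.1, lexle_iff.2 (Or.inl (lexlt_of_lexle_lexlt hr.2 h))⟩
  · intro hsub
    have hpmem : p ∈ N.filter (fun r => lexle r q) :=
      hsub (Finset.mem_filter.2 ⟨hp, lexle_iff.2 (Or.inr rfl)⟩)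
    rw [Finset.mem_filter] at hpmem
    have := lexlt_of_lexle_lexlt hpmem.2 h
    rcases p with ⟨a, b⟩
    simp only [lexlt] at this
    omega

lemma tau0_bijOn (N : Finset (ℕ × ℕ)) : Set.BijOn (tau0 N) ↑N (Set.Icc 1 N.card) := by
  have hmaps : ∀ p ∈ N, tau0 N p ∈ Finset.Icc 1 N.card := by
    intro p hp
    rw [tau0, if_pos hp, Finset.mem_Icc]
    constructor
    · exact Finset.card_pos.2 ⟨p, Finset.mem_filter.2 ⟨hp, lexle_iff.2 (Or.inr rfl)⟩⟩
    · exact Finset.card_le_card (Finset.filter_subset _ _)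
  have hinj : Set.InjOn (tau0 N) ↑N := by
    intro p hp q hq hpq
    replace hp := Finset.mem_coe.1 hp
    replace hq := Finset.mem_coe.1 hq
    by_contra hne
    rcases lexlt_total hne with h | h
    · exact (tau0_mono hq hp h).ne hpq
    · exact (tau0_mono hp hq h).ne' hpq
  have himg : N.image (tau0 N) = Finset.Icc 1 N.card := by
    apply Finset.eq_of_subset_of_card_le
    · intro v hv
      obtain ⟨p, hp, rfl⟩ := Finset.mem_image.1 hv
      exact hmaps p hp
    · rw [Finset.card_image_of_injOn hinj, Nat.card_Icc]
      omega
  refine ⟨fun p hp => ?_, hinj, fun v hv => ?_⟩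
  · rw [← Finset.coe_Icc]; exact hmaps p (Finset.mem_coe.1 hp)
  · rw [← Finset.coe_Icc, ← himg] at hv
    obtain ⟨p, hp, hpv⟩ := Finset.mem_coe.1 hv |> Finset.mem_image.1
    exact ⟨p, hp, hpv⟩

lemma tau0_source (N : Finset (ℕ × ℕ)) : IsSource N (tau0 N) := by
  intro p hp hp'
  have key : ∀ q : ℕ × ℕ, lexle q (p.1, p.2 + 1) ↔ q = (p.1, p.2 + 1) ∨ lexle q p := by
    rintro ⟨a, b⟩; rcases p with ⟨c, d⟩
    simp only [lexle, Prod.mk.injEq]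
    omega
  have hfilter : N.filter (fun q => lexle q (p.1, p.2 + 1)) =
      insert (p.1, p.2 + 1) (N.filter (fun q => lexle q p)) := by
    ext q
    simp only [Finset.mem_filter, Finset.mem_insert, key]
    constructor
    · rintro ⟨hqN, h | h⟩
      · exact Or.inl h
      · exact Or.inr ⟨hqN, h⟩
    · rintro (rfl | ⟨hqN, h⟩)
      · exact ⟨hp', Or.inl rfl⟩
      · exact ⟨hqN, Or.inr h⟩
  rw [tau0, tau0, if_pos hp, if_pos hp', hfilter, Finset.card_insert_of_notMem]
  rw [Finset.mem_filter]
  rintro ⟨-, h⟩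
  rcases p with ⟨c, d⟩
  simp only [lexle] at h
  omega

variable {N : Finset (ℕ × ℕ)} {τ : ℕ × ℕ → ℕ} {lam mu : ℕ → ℕ}

/-- Rows of a skew shape are contiguous. -/
lemma row_contig (hmem : ∀ p : ℕ × ℕ, p ∈ N ↔ mu p.1 < p.2 ∧ p.2 ≤ lam p.1)
    {r c c' m : ℕ} (h1 : (r, c) ∈ N) (h2 : (r, c') ∈ N)
    (hm1 : c ≤ m) (hm2 : m ≤ c') : (r, m) ∈ N := by
  have e1 : mu r < c ∧ c ≤ lam r := (hmem (r, c)).1 h1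
  have e2 : mu r < c' ∧ c' ≤ lam r := (hmem (r, c')).1 h2
  exact (hmem (r, m)).2 ⟨show mu r < m by omega, show m ≤ lam r by omega⟩

/-- Along a row, a source tableau has consecutive entries. -/
lemma row_step (hmem : ∀ p : ℕ × ℕ, p ∈ N ↔ mu p.1 < p.2 ∧ p.2 ≤ lam p.1)
    (hsrc : IsSource N τ) :
    ∀ k r c, (r, c) ∈ N → (r, c + k) ∈ N → τ (r, c + k) = τ (r, c) + k := by
  intro k
  induction k with
  | zero => intro r c h1 _; rfl
  | succ k ih =>
    intro r c h1 h2
    have hk : (r, c + k) ∈ N := row_contig hmem h1 h2 (by omega) (by omega)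
    have hstep : τ (r, c + k + 1) = τ (r, c + k) + 1 := hsrc (r, c + k) hk h2
    have := ih r c h1 hk
    rw [show c + (k + 1) = c + k + 1 from rfl, hstep, this]
    omega

/-- Row values of a source tableau form an interval. -/
lemma row_between (hmem : ∀ p : ℕ × ℕ, p ∈ N ↔ mu p.1 < p.2 ∧ p.2 ≤ lam p.1)
    (hsrc : IsSource N τ) {r c1 c2 v : ℕ}
    (h1 : (r, c1) ∈ N) (h2 : (r, c2) ∈ N)
    (hv1 : τ (r, c1) ≤ v) (hv2 : v ≤ τ (r, c2)) :
    ∃ c, (r, c) ∈ N ∧ τ (r, c) = v := by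
  rcases le_total c1 c2 with h | h
  · obtain ⟨k, rfl⟩ : ∃ k, c2 = c1 + k := ⟨c2 - c1, by omega⟩
    have hval := row_step hmem hsrc k r c1 h1 h2
    have hd : v - τ (r, c1) ≤ k := by omega
    have hmemd : (r, c1 + (v - τ (r, c1))) ∈ N := row_contig hmem h1 h2 (by omega) (by omega)
    have := row_step hmem hsrc (v - τ (r, c1)) r c1 h1 hmemd
    exact ⟨c1 + (v - τ (r, c1)), hmemd, by omega⟩
  · obtain ⟨k, rfl⟩ : ∃ k, c1 = c2 + k := ⟨c1 - c2, by omega⟩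
    have hval := row_step hmem hsrc k r c2 h2 h1
    exact ⟨c2 + k, h1, by omega⟩

/-- If consecutive rows share a column, all of row `r` precedes all of row `r+1`. -/
lemma rows_sep (hmem : ∀ p : ℕ × ℕ, p ∈ N ↔ mu p.1 < p.2 ∧ p.2 ≤ lam p.1)
    (hsyt : IsSYTN N τ) (hsrc : IsSource N τ) {r j : ℕ}
    (hj1 : (r, j) ∈ N) (hj2 : (r + 1, j) ∈ N) {c c' : ℕ}
    (hc : (r, c) ∈ N) (hc' : (r + 1, c') ∈ N) : τ (r, c) < τ (r + 1, c') := by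
  by_contra hle
  push_neg at hle
  have hcol : τ (r, j) < τ (r + 1, j) := hsyt.2.2 (r, j) hj1 hj2
  set m := max (τ (r + 1, c')) (τ (r, j)) with hm
  have hr : ∃ a, (r, a) ∈ N ∧ τ (r, a) = m := by
    rcases le_total (τ (r, c)) (τ (r, j)) with h | h
    · exact ⟨j, hj1, by omega⟩
    · exact row_between hmem hsrc hj1 hc (le_max_right _ _) (by omega)
  have hr' : ∃ b, (r + 1, b) ∈ N ∧ τ (r + 1, b) = m := by
    rcases le_total (τ (r + 1, c')) (τ (r + 1, j)) with h | h
    · exact row_between hmem hsrc hc' hj2 (le_max_left _ _) (by omega)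
    · exact ⟨c', hc', by omega⟩
  obtain ⟨a, ha, hva⟩ := hr
  obtain ⟨b, hb, hvb⟩ := hr'
  have : (r, a) = (r + 1, b) :=
    hsyt.1.injOn (Finset.mem_coe.2 ha) (Finset.mem_coe.2 hb) (by rw [hva, hvb])
  simp only [Prod.mk.injEq] at this
  omega

/-- Any path crossing from row `≤ r` to row `> r` yields a shared column between
rows `r` and `r+1`. -/
lemma cross (hconn : ConnectedShape N) {u v : ℕ × ℕ} (hu : u ∈ N) (hv : v ∈ N)
    {r : ℕ} (hur : u.1 ≤ r) (hvr : r < v.1) :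
    ∃ j, (r, j) ∈ N ∧ (r + 1, j) ∈ N := by
  have h := hconn u hu v hv
  have key : ∀ w, Relation.ReflTransGen (fun a b => b ∈ N ∧ AdjCell a b) u w →
      w ∈ N ∧ (r < w.1 → ∃ j, (r, j) ∈ N ∧ (r + 1, j) ∈ N) := by
    intro w hw
    induction hw with
    | refl => exact ⟨hu, fun hgt => absurd hgt (by omega)⟩
    | @tail b c hpath hstep ih =>
      obtain ⟨hcN, hadj⟩ := hstep
      refine ⟨hcN, fun hgt => ?_⟩
      by_cases hb : r < b.1
      · exact ih.2 hb
      · push_neg at hb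
        rcases hadj with ⟨h1, _⟩ | ⟨h1, h2 | h2⟩
        · omega
        · omega
        · have hb1 : b.1 = r := by omega
          have hc1 : c.1 = r + 1 := by omega
          refine ⟨b.2, ?_, ?_⟩
          · rw [← hb1]; exact ih.1
          · rw [← hc1, h1]; exact hcN
  exact (key v h).2 hvr

/-- Strict increase across rows for any source SYT. -/
lemma cross_rows (hmem : ∀ p : ℕ × ℕ, p ∈ N ↔ mu p.1 < p.2 ∧ p.2 ≤ lam p.1)
    (hconn : ConnectedShape N) (hsyt : IsSYTN N τ) (hsrc : IsSource N τ) :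
    ∀ d (p q : ℕ × ℕ), p ∈ N → q ∈ N → q.1 = p.1 + d + 1 → τ p < τ q := by
  intro d
  induction d with
  | zero =>
    rintro ⟨p1, p2⟩ ⟨q1, q2⟩ hp hq h
    obtain ⟨j, hj1, hj2⟩ := cross hconn hp hq (le_refl p1) (show p1 < q1 by omega)
    have hq' : (p1 + 1, q2) ∈ N := by
      have : q1 = p1 + 1 := by omega
      rw [← this]; exact hq
    exact (show q1 = p1 + 1 by omega) ▸ rows_sep hmem hsyt hsrc hj1 hj2 hp hq'
  | succ d ih =>
    rintro ⟨p1, p2⟩ ⟨q1, q2⟩ hp hq h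
    obtain ⟨j, hj1, hj2⟩ := cross hconn hp hq
      (show p1 ≤ p1 + d + 1 by omega) (show p1 + d + 1 < q1 by omega)
    have h1 : τ (p1, p2) < τ (p1 + d + 1, j) := ih (p1, p2) (p1 + d + 1, j) hp hj1 rfl
    have hq' : (p1 + d + 1 + 1, q2) ∈ N := by
      have : q1 = p1 + d + 1 + 1 := by omega
      rw [← this]; exact hq
    have h2 : τ (p1 + d + 1, j) < τ (p1 + d + 1 + 1, q2) :=
      rows_sep hmem hsyt hsrc hj1 hj2 hj1 hq'
    have he : q1 = p1 + d + 1 + 1 := by omega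
    rw [he]
    omega

/-- Any source SYT is strictly lex-monotone. -/
lemma mono_of_source (hmem : ∀ p : ℕ × ℕ, p ∈ N ↔ mu p.1 < p.2 ∧ p.2 ≤ lam p.1)
    (hconn : ConnectedShape N) (hsyt : IsSYTN N τ) (hsrc : IsSource N τ) :
    ∀ p ∈ N, ∀ q ∈ N, lexlt q p → τ q < τ p := by
  rintro ⟨p1, p2⟩ hp ⟨q1, q2⟩ hq hlt
  rcases hlt with h | ⟨h1, h2⟩
  · exact cross_rows hmem hconn hsyt hsrc (p1 - q1 - 1) (q1, q2) (p1, p2) hq hp (by omega)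
  · have h1' : q1 = p1 := h1
    subst h1'
    have := row_step hmem hsrc (p2 - q2) q1 q2 hq
      (by rw [show q2 + (p2 - q2) = p2 by omega]; exact hp)
    rw [show q2 + (p2 - q2) = p2 by omega] at this
    omega

end SourceAux

/-- A connected skew shape admitting a standard Young tableau has exactly one
source tableau. -/
theorem existsUnique_source (N : Finset (ℕ × ℕ))
    (hskew : IsSkewShape N) (hconn : ConnectedShape N)
    (hne : (sytSetN N).Nonempty) :
    ∃! τ : ℕ × ℕ → ℕ, τ ∈ sytSetN N ∧ IsSource N τ := by
  obtain ⟨lam, mu, hlam, hmu, hml, hmem⟩ := hskew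
  refine ⟨SourceAux.tau0 N, ⟨⟨⟨SourceAux.tau0_bijOn N, ?_, ?_⟩, ?_⟩, SourceAux.tau0_source N⟩, ?_⟩
  · intro p hp hp'
    exact SourceAux.tau0_mono hp' hp (Or.inr ⟨rfl, by omega⟩)
  · intro p hp hp'
    exact SourceAux.tau0_mono hp' hp (Or.inl (by omega))
  · intro v hv
    rw [SourceAux.tau0, if_neg hv]
  · rintro τ ⟨⟨hsyt, hoff⟩, hsrc⟩
    funext v
    by_cases hv : v ∈ N
    · rw [SourceAux.rank_eq hsyt.1 (SourceAux.mono_of_source hmem hconn hsyt hsrc) hv,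
        SourceAux.tau0, if_pos hv]
    · rw [hoff v hv, SourceAux.tau0, if_neg hv]
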